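/- Fix σ ∈ (0,1), ε ∈ (0, 1 − 2^(σ−1)) and reals 0 < L < U. Let K ≥ 1 and let L = c_1 < c_2 < ... < c_{K+1} = U be the greedy breakpoints: for each k ∈ {1,...,K}, c_{k+1} is the largest u ∈ (c_k, U] such that Φ^f(c_k, u) ≤ ε and Φ^g(c_k, u) ≤ ε. Let t^f > 1 satisfy ((t^f)^(σ−1) + 1)/((t^f) + 1)^(σ−1) = 2^(2−σ)·(1+ε) and let t^g > 1 satisfy ((t^g)^σ + 1)/((t^g) + 1)^σ = 2^(1−σ)·(1−ε). Then ln(U/L)·max{1/ln(t^f), 1/ln(t^g)} ≤ K ≤ ln(U/L)·((1−σ)/ln(1+ε) − σ/ln(1−ε)) + 1. -/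

import Mathlib

/-- f(t) = t^(σ-1) (real power). -/
noncomputable def fCNL (σ t : ℝ) : ℝ := t ^ (σ - 1)

/-- g(t) = t^σ (real power). -/
noncomputable def gCNL (σ t : ℝ) : ℝ := t ^ σ

/-- Chord (linear interpolation) approximation of f on [c,u], evaluated at t. -/
noncomputable def fhat (σ c u t : ℝ) : ℝ :=
  fCNL σ c + ((fCNL σ u - fCNL σ c) / (u - c)) * (t - c)

/-- Chord (linear interpolation) approximation of g on [c,u], evaluated at t. -/
noncomputable def ghat (σ c u t : ℝ) : ℝ :=
  gCNL σ c + ((gCNL σ u - gCNL σ c) / (u - c)) * (t - c)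

/-- Pointwise relative error of the chord approximation of f. -/
noncomputable def phiF (σ c u t : ℝ) : ℝ := (fhat σ c u t - fCNL σ t) / fCNL σ t

/-- Pointwise relative error of the chord approximation of g. -/
noncomputable def phiG (σ c u t : ℝ) : ℝ := (gCNL σ t - ghat σ c u t) / gCNL σ t

/-- Maximum relative error of the chord approximation of f on [c,u]. -/
noncomputable def PhiF (σ c u : ℝ) : ℝ := sSup (phiF σ c u '' Set.Icc c u)

/-- Maximum relative error of the chord approximation of g on [c,u]. -/
noncomputable def PhiG (σ c u : ℝ) : ℝ := sSup (phiG σ c u '' Set.Icc c u)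

open Real

lemma hasDerivAt_hfun (a r : ℝ) (hr : 0 < r) :
    HasDerivAt (fun x : ℝ => (x ^ a + 1) / (x + 1) ^ a)
      (a * (r ^ (a - 1) - 1) * (r + 1) ^ (a - 1) / ((r + 1) ^ a) ^ 2) r := by
  have hr1 : (0:ℝ) < r + 1 := by linarith
  have h1 : HasDerivAt (fun x : ℝ => x ^ a + 1) (a * r ^ (a - 1)) r :=
    (Real.hasDerivAt_rpow_const (Or.inl hr.ne')).add_const 1
  have h2 : HasDerivAt (fun x : ℝ => (x + 1) ^ a) (a * (r + 1) ^ (a - 1)) r := by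
    have := (Real.hasDerivAt_rpow_const (p := a) (Or.inl hr1.ne')).comp r
      ((hasDerivAt_id r).add_const 1)
    simpa [Function.comp_def] using this
  have hD : (r + 1) ^ a ≠ 0 := (Real.rpow_pos_of_pos hr1 a).ne'
  have h := h1.div h2 hD
  refine h.congr_deriv (Eq.symm ?_)
  have key : r ^ (a-1) * (r+1) ^ a = r ^ (a-1) * (r+1) ^ (a-1) * (r+1) := by
    rw [mul_assoc]; congr 1; rw [← Real.rpow_add_one hr1.ne']; ring_nf
  have key2 : r ^ (a-1) * r = r ^ a := by
    rw [← Real.rpow_add_one hr.ne']; ring_nf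
  rw [div_eq_div_iff (by positivity) (by positivity)]
  linear_combination (-a * ((r+1)^a)^2) * key + (-(a*(r+1)^(a-1)) * ((r+1)^a)^2) * key2

lemma hfun_contOn (a : ℝ) : ContinuousOn (fun x : ℝ => (x ^ a + 1) / (x + 1) ^ a) (Set.Ici 1) :=
  fun x hx => ((hasDerivAt_hfun a x (lt_of_lt_of_le one_pos hx)).continuousAt).continuousWithinAt

lemma hfun_strictMonoOn (a : ℝ) (ha : a < 0) :
    StrictMonoOn (fun x : ℝ => (x ^ a + 1) / (x + 1) ^ a) (Set.Ici 1) := by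
  apply strictMonoOn_of_deriv_pos (convex_Ici 1) (hfun_contOn a)
  intro r hr
  rw [interior_Ici] at hr
  have hr0 : (0:ℝ) < r := lt_trans one_pos hr
  rw [(hasDerivAt_hfun a r hr0).deriv]
  have h1 : r ^ (a - 1) - 1 < 0 := by
    have := Real.rpow_lt_one_of_one_lt_of_neg hr (by linarith : a - 1 < 0)
    linarith
  have h2 : (0:ℝ) < (r + 1) ^ (a - 1) := Real.rpow_pos_of_pos (by linarith) _
  have h3 : (0:ℝ) < ((r + 1) ^ a) ^ 2 := by positivity
  have : 0 < a * (r ^ (a - 1) - 1) := mul_pos_of_neg_of_neg ha h1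
  positivity

lemma hfun_strictAntiOn (a : ℝ) (ha0 : 0 < a) (ha1 : a < 1) :
    StrictAntiOn (fun x : ℝ => (x ^ a + 1) / (x + 1) ^ a) (Set.Ici 1) := by
  apply strictAntiOn_of_deriv_neg (convex_Ici 1) (hfun_contOn a)
  intro r hr
  rw [interior_Ici] at hr
  have hr0 : (0:ℝ) < r := lt_trans one_pos hr
  rw [(hasDerivAt_hfun a r hr0).deriv]
  have h1 : r ^ (a - 1) - 1 < 0 := by
    have := Real.rpow_lt_one_of_one_lt_of_neg hr (by linarith : a - 1 < 0)
    linarith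
  have h2 : (0:ℝ) < (r + 1) ^ (a - 1) := Real.rpow_pos_of_pos (by linarith) _
  have h3 : (0:ℝ) < ((r + 1) ^ a) ^ 2 := by positivity
  have hneg : a * (r ^ (a - 1) - 1) < 0 := mul_neg_of_pos_of_neg ha0 h1
  exact div_neg_of_neg_of_pos (mul_neg_of_neg_of_pos hneg h2) h3

lemma phiF_contOn (σ c u : ℝ) (hc : 0 < c) : ContinuousOn (phiF σ c u) (Set.Icc c u) := by
  have hf : ContinuousOn (fun t => fCNL σ t) (Set.Icc c u) := fun t ht =>
    (Real.continuousAt_rpow_const t (σ - 1)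
      (Or.inl (lt_of_lt_of_le hc ht.1).ne')).continuousWithinAt
  have hfh : ContinuousOn (fun t => fhat σ c u t) (Set.Icc c u) := by
    unfold fhat; fun_prop
  exact (hfh.sub hf).div hf fun t ht =>
    (Real.rpow_pos_of_pos (lt_of_lt_of_le hc ht.1) _).ne'

lemma phiG_contOn (σ c u : ℝ) (hc : 0 < c) : ContinuousOn (phiG σ c u) (Set.Icc c u) := by
  have hf : ContinuousOn (fun t => gCNL σ t) (Set.Icc c u) := fun t ht =>
    (Real.continuousAt_rpow_const t σ
      (Or.inl (lt_of_lt_of_le hc ht.1).ne')).continuousWithinAt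
  have hfh : ContinuousOn (fun t => ghat σ c u t) (Set.Icc c u) := by
    unfold ghat; fun_prop
  exact (hf.sub hfh).div hf fun t ht =>
    (Real.rpow_pos_of_pos (lt_of_lt_of_le hc ht.1) _).ne'

lemma step_f (σ ε c u t0 : ℝ) (hσ1 : σ < 1) (hc : 0 < c) (hcu : c < u)
    (ht0 : 1 < t0)
    (heq : (t0 ^ (σ - 1) + 1) / (t0 + 1) ^ (σ - 1) = (2 : ℝ) ^ (2 - σ) * (1 + ε))
    (hPhi : PhiF σ c u ≤ ε) : u ≤ c * t0 := by
  by_contra hcon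
  push_neg at hcon
  set r := u / c with hrdef
  have hrt : t0 < r := (lt_div_iff₀ hc).mpr (by linarith)
  have hr1 : (1:ℝ) < r := lt_trans ht0 hrt
  have hr0 : (0:ℝ) < r := by linarith
  have hu : u = c * r := by rw [hrdef]; field_simp
  set m := (c + u) / 2 with hmdef
  have hmem : m ∈ Set.Icc c u := ⟨by rw [hmdef]; linarith, by rw [hmdef]; linarith⟩
  have hbdd : BddAbove (phiF σ c u '' Set.Icc c u) :=
    (isCompact_Icc.image_of_continuousOn (phiF_contOn σ c u hc)).bddAbove
  have hle : phiF σ c u m ≤ PhiF σ c u := le_csSup hbdd ⟨m, hmem, rfl⟩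
  -- value at midpoint
  have hne : u - c ≠ 0 := sub_ne_zero.mpr hcu.ne'
  have hfhat : fhat σ c u m = (c ^ (σ-1) + u ^ (σ-1)) / 2 := by
    simp only [fhat, fCNL, hmdef]
    field_simp
    ring
  have hma : m ^ (σ-1) = c ^ (σ-1) * ((r+1) ^ (σ-1) / (2:ℝ) ^ (σ-1)) := by
    have hm2 : m = c * ((r+1)/2) := by rw [hmdef, hu]; ring
    rw [hm2, Real.mul_rpow hc.le (by positivity),
      Real.div_rpow (by positivity) (by norm_num)]
  have hua : u ^ (σ-1) = c ^ (σ-1) * r ^ (σ-1) := by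
    rw [hu, Real.mul_rpow hc.le hr0.le]
  have h2a : (2:ℝ) ^ (2-σ) = 2 / (2:ℝ) ^ (σ-1) := by
    rw [show (2:ℝ)-σ = 1 - (σ-1) by ring, Real.rpow_sub two_pos, Real.rpow_one]
  have hca : (0:ℝ) < c ^ (σ-1) := Real.rpow_pos_of_pos hc _
  have hra : (0:ℝ) < (r+1) ^ (σ-1) := Real.rpow_pos_of_pos (by linarith) _
  have h2s : (0:ℝ) < (2:ℝ) ^ (σ-1) := Real.rpow_pos_of_pos two_pos _
  have hval : phiF σ c u m = ((r ^ (σ-1) + 1) / (r+1) ^ (σ-1)) / (2:ℝ) ^ (2-σ) - 1 := by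
    simp only [phiF, fCNL]
    rw [hfhat, hma, hua, h2a]
    field_simp
    ring
  -- monotonicity
  have hmono := hfun_strictMonoOn (σ-1) (by linarith) (Set.mem_Ici.mpr ht0.le)
      (Set.mem_Ici.mpr hr1.le) hrt
  simp only [] at hmono
  rw [heq] at hmono
  have h2pos : (0:ℝ) < (2:ℝ) ^ (2-σ) := Real.rpow_pos_of_pos two_pos _
  have : (1+ε) < ((r ^ (σ-1) + 1) / (r+1) ^ (σ-1)) / (2:ℝ) ^ (2-σ) :=
    (lt_div_iff₀ h2pos).mpr (by linarith)
  have hcontra : ε < phiF σ c u m := by rw [hval]; linarith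
  linarith

lemma step_g (σ ε c u t0 : ℝ) (hσ0 : 0 < σ) (hσ1 : σ < 1) (hc : 0 < c) (hcu : c < u)
    (ht0 : 1 < t0)
    (heq : (t0 ^ σ + 1) / (t0 + 1) ^ σ = (2 : ℝ) ^ (1 - σ) * (1 - ε))
    (hPhi : PhiG σ c u ≤ ε) : u ≤ c * t0 := by
  by_contra hcon
  push_neg at hcon
  set r := u / c with hrdef
  have hrt : t0 < r := (lt_div_iff₀ hc).mpr (by linarith)
  have hr1 : (1:ℝ) < r := lt_trans ht0 hrt
  have hr0 : (0:ℝ) < r := by linarith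
  have hu : u = c * r := by rw [hrdef]; field_simp
  set m := (c + u) / 2 with hmdef
  have hmem : m ∈ Set.Icc c u := ⟨by rw [hmdef]; linarith, by rw [hmdef]; linarith⟩
  have hbdd : BddAbove (phiG σ c u '' Set.Icc c u) :=
    (isCompact_Icc.image_of_continuousOn (phiG_contOn σ c u hc)).bddAbove
  have hle : phiG σ c u m ≤ PhiG σ c u := le_csSup hbdd ⟨m, hmem, rfl⟩
  have hne : u - c ≠ 0 := sub_ne_zero.mpr hcu.ne'
  have hghat : ghat σ c u m = (c ^ σ + u ^ σ) / 2 := by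
    simp only [ghat, gCNL, hmdef]
    field_simp
    ring
  have hma : m ^ σ = c ^ σ * ((r+1) ^ σ / (2:ℝ) ^ σ) := by
    have hm2 : m = c * ((r+1)/2) := by rw [hmdef, hu]; ring
    rw [hm2, Real.mul_rpow hc.le (by positivity),
      Real.div_rpow (by positivity) (by norm_num)]
  have hua : u ^ σ = c ^ σ * r ^ σ := by
    rw [hu, Real.mul_rpow hc.le hr0.le]
  have h2a : (2:ℝ) ^ (1-σ) = 2 / (2:ℝ) ^ σ := by
    rw [Real.rpow_sub two_pos, Real.rpow_one]
  have hca : (0:ℝ) < c ^ σ := Real.rpow_pos_of_pos hc _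
  have hra : (0:ℝ) < (r+1) ^ σ := Real.rpow_pos_of_pos (by linarith) _
  have h2s : (0:ℝ) < (2:ℝ) ^ σ := Real.rpow_pos_of_pos two_pos _
  have hval : phiG σ c u m = 1 - ((r ^ σ + 1) / (r+1) ^ σ) / (2:ℝ) ^ (1-σ) := by
    simp only [phiG, gCNL]
    rw [hghat, hma, hua, h2a]
    field_simp
    ring
  have hmono := hfun_strictAntiOn σ hσ0 hσ1 (Set.mem_Ici.mpr ht0.le)
      (Set.mem_Ici.mpr hr1.le) hrt
  simp only [] at hmono
  rw [heq] at hmono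
  have h2pos : (0:ℝ) < (2:ℝ) ^ (1-σ) := Real.rpow_pos_of_pos two_pos _
  have : ((r ^ σ + 1) / (r+1) ^ σ) / (2:ℝ) ^ (1-σ) < 1 - ε :=
    (div_lt_iff₀ h2pos).mpr (by linarith)
  have hcontra : ε < phiG σ c u m := by rw [hval]; linarith
  linarith

lemma Phi_both_le (σ ε ρ c u : ℝ) (hσ0 : 0 < σ) (hσ1 : σ < 1) (hε0 : 0 ≤ ε) (hε1 : ε ≤ 1)
    (hc : 0 < c) (hcu : c < u) (hr : u / c ≤ ρ)
    (hρf : ρ ^ (1 - σ) ≤ 1 + ε) (hρg : 1 - ε ≤ ρ ^ (-σ)) :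
    PhiF σ c u ≤ ε ∧ PhiG σ c u ≤ ε := by
  have hu0 : (0:ℝ) < u := lt_trans hc hcu
  have hrc : (0:ℝ) < u / c := by positivity
  have hne : u - c ≠ 0 := sub_ne_zero.mpr hcu.ne'
  -- key base inequalities
  have hfkey : c ^ (σ-1) ≤ (1 + ε) * u ^ (σ-1) := by
    have h1 : (u/c) ^ (1-σ) ≤ ρ ^ (1-σ) :=
      Real.rpow_le_rpow hrc.le hr (by linarith)
    have h2 : (u/c) ^ (1-σ) = c ^ (σ-1) / u ^ (σ-1) := by
      rw [Real.div_rpow hu0.le hc.le, show (1:ℝ)-σ = -(σ-1) by ring,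
        Real.rpow_neg hu0.le, Real.rpow_neg hc.le]
      field_simp
    have hupos : (0:ℝ) < u ^ (σ-1) := Real.rpow_pos_of_pos hu0 _
    have := h1.trans hρf
    rw [h2, div_le_iff₀ hupos] at this
    linarith
  have hgkey : (1 - ε) * u ^ σ ≤ c ^ σ := by
    have h1 : ρ ^ (-σ) ≤ (u/c) ^ (-σ) :=
      Real.rpow_le_rpow_of_nonpos hrc hr (by linarith)
    have h2 : (u/c) ^ (-σ) = c ^ σ / u ^ σ := by
      rw [Real.rpow_neg hrc.le, Real.div_rpow hu0.le hc.le]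
      field_simp
    have hupos : (0:ℝ) < u ^ σ := Real.rpow_pos_of_pos hu0 _
    have := hρg.trans h1
    rw [h2, le_div_iff₀ hupos] at this
    linarith
  constructor
  · apply Real.sSup_le _ hε0
    rintro x ⟨t, ht, rfl⟩
    have ht0 : (0:ℝ) < t := lt_of_lt_of_le hc ht.1
    have htpos : (0:ℝ) < t ^ (σ-1) := Real.rpow_pos_of_pos ht0 _
    have hslope : u ^ (σ-1) ≤ c ^ (σ-1) :=
      Real.rpow_le_rpow_of_nonpos hc hcu.le (by linarith)
    have hfh : fhat σ c u t ≤ c ^ (σ-1) := by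
      simp only [fhat, fCNL]
      have : (u ^ (σ-1) - c ^ (σ-1)) / (u - c) * (t - c) ≤ 0 := by
        apply mul_nonpos_of_nonpos_of_nonneg
        · apply div_nonpos_of_nonpos_of_nonneg <;> [linarith; linarith [ht.1]]
        · linarith [ht.1]
      linarith
    have hft : u ^ (σ-1) ≤ t ^ (σ-1) :=
      Real.rpow_le_rpow_of_nonpos ht0 ht.2 (by linarith)
    simp only [phiF, fCNL]
    rw [div_le_iff₀ htpos]
    have h1 : c ^ (σ-1) ≤ (1+ε) * t ^ (σ-1) := by
      calc c ^ (σ-1) ≤ (1+ε) * u ^ (σ-1) := hfkey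
        _ ≤ (1+ε) * t ^ (σ-1) := by nlinarith
    linarith
  · apply Real.sSup_le _ hε0
    rintro x ⟨t, ht, rfl⟩
    have ht0 : (0:ℝ) < t := lt_of_lt_of_le hc ht.1
    have htpos : (0:ℝ) < t ^ σ := Real.rpow_pos_of_pos ht0 _
    have hslope : c ^ σ ≤ u ^ σ := Real.rpow_le_rpow hc.le hcu.le hσ0.le
    have hgh : c ^ σ ≤ ghat σ c u t := by
      simp only [ghat, gCNL]
      have : 0 ≤ (u ^ σ - c ^ σ) / (u - c) * (t - c) := by
        apply mul_nonneg (div_nonneg (by linarith) (by linarith)) (by linarith [ht.1])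
      linarith
    have hgt : t ^ σ ≤ u ^ σ := Real.rpow_le_rpow ht0.le ht.2 hσ0.le
    simp only [phiG, gCNL]
    rw [div_le_iff₀ htpos]
    have h1 : (1-ε) * t ^ σ ≤ c ^ σ := by
      calc (1-ε) * t ^ σ ≤ (1-ε) * u ^ σ := by nlinarith
        _ ≤ c ^ σ := hgkey
    linarith

/-- Theorem 4: bounds on the number K of sub-intervals produced by the greedy
discretization procedure (Algorithm 1). -/
theorem stmt_14 (σ ε L U : ℝ) (hσ0 : 0 < σ) (hσ1 : σ < 1)
    (hε0 : 0 < ε) (hε1 : ε < 1 - (2 : ℝ) ^ (σ - 1))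
    (hL : 0 < L) (hLU : L < U)
    (K : ℕ) (hK : 1 ≤ K) (c : ℕ → ℝ)
    (hc1 : c 1 = L) (hcK : c (K + 1) = U)
    (hgreedy : ∀ k, 1 ≤ k → k ≤ K →
      c (k + 1) ∈ Set.Ioc (c k) U ∧
      PhiF σ (c k) (c (k + 1)) ≤ ε ∧ PhiG σ (c k) (c (k + 1)) ≤ ε ∧
      ∀ u ∈ Set.Ioc (c k) U, PhiF σ (c k) u ≤ ε → PhiG σ (c k) u ≤ ε → u ≤ c (k + 1))
    (tf : ℝ) (htf : 1 < tf)
    (htfeq : (tf ^ (σ - 1) + 1) / (tf + 1) ^ (σ - 1) = (2 : ℝ) ^ (2 - σ) * (1 + ε))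
    (tg : ℝ) (htg : 1 < tg)
    (htgeq : (tg ^ σ + 1) / (tg + 1) ^ σ = (2 : ℝ) ^ (1 - σ) * (1 - ε)) :
    Real.log (U / L) * max (1 / Real.log tf) (1 / Real.log tg) ≤ (K : ℝ) ∧
    (K : ℝ) ≤ Real.log (U / L) * ((1 - σ) / Real.log (1 + ε) - σ / Real.log (1 - ε)) + 1 := by
  have h2σ : (0:ℝ) < (2:ℝ) ^ (σ - 1) := Real.rpow_pos_of_pos two_pos _
  have hε2 : (0:ℝ) < 1 - ε := by linarith
  have hstep : ∀ k, 1 ≤ k → k ≤ K → c k < c (k + 1) := fun k h1 h2 => ((hgreedy k h1 h2).1).1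
  have hpos : ∀ k, 1 ≤ k → k ≤ K + 1 → 0 < c k := by
    intro k h1 h2
    induction k with
    | zero => omega
    | succ n ih =>
      rcases Nat.lt_or_ge n 1 with h | h
      · have : n + 1 = 1 := by omega
        rw [this, hc1]; exact hL
      · exact lt_trans (ih h (by omega)) (hstep n h (by omega))
  have hmono : ∀ j k, 1 ≤ k → k + j ≤ K + 1 → c k ≤ c (k + j) := by
    intro j
    induction j with
    | zero => intro k _ _; exact le_refl _
    | succ n ih =>
      intro k h1 h2
      have h3 := hstep (k+n) (by omega) (by omega)
      exact le_trans (ih k h1 (by omega)) h3.le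
  have hckU : ∀ k, 1 ≤ k → k ≤ K → c (k+1) ≤ U := by
    intro k h1 h2
    have h4 := hmono (K - k) (k+1) (by omega) (by omega)
    have h5 : k + 1 + (K - k) = K + 1 := by omega
    rw [h5, hcK] at h4
    exact h4
  have hUL : Real.log (U/L) = Real.log U - Real.log L := Real.log_div (by linarith) hL.ne'
  have hULpos : 0 < Real.log (U/L) := Real.log_pos ((one_lt_div hL).mpr hLU)
  -- lower bound
  have hlow : ∀ t0 : ℝ, 1 < t0 → (∀ k, 1 ≤ k → k ≤ K → c (k+1) ≤ c k * t0) →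
      Real.log (U/L) * (1 / Real.log t0) ≤ (K : ℝ) := by
    intro t0 ht0 hst
    have hlt : 0 < Real.log t0 := Real.log_pos ht0
    have htel := Finset.sum_range_sub (fun i => Real.log (c (i+1))) K
    have hsum : Real.log (U/L) ≤ (K : ℝ) * Real.log t0 := by
      have hb : ∀ i ∈ Finset.range K,
          Real.log (c (i+1+1)) - Real.log (c (i+1)) ≤ Real.log t0 := by
        intro i hi
        have hi' := Finset.mem_range.mp hi
        have hck := hpos (i+1) (by omega) (by omega)
        have h1 := hst (i+1) (by omega) (by omega)
        have h2 : Real.log (c (i+1+1)) ≤ Real.log (c (i+1) * t0) := by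
          rw [Real.log_le_log_iff (hpos (i+2) (by omega) (by omega)) (by positivity)]
          exact h1
        rw [Real.log_mul hck.ne' (by positivity)] at h2
        linarith
      calc Real.log (U/L) = ∑ i ∈ Finset.range K,
            (Real.log (c (i+1+1)) - Real.log (c (i+1))) := by
            rw [htel, hc1, hcK, hUL]
        _ ≤ ∑ _i ∈ Finset.range K, Real.log t0 := Finset.sum_le_sum hb
        _ = (K : ℝ) * Real.log t0 := by
            rw [Finset.sum_const, Finset.card_range, nsmul_eq_mul]
    rw [mul_one_div, div_le_iff₀ hlt]
    linarith
  constructor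
  · rcases max_cases (1 / Real.log tf) (1 / Real.log tg) with ⟨h, _⟩ | ⟨h, _⟩ <;> rw [h]
    · exact hlow tf htf fun k h1 h2 =>
        step_f σ ε (c k) (c (k+1)) tf hσ1 (hpos k h1 (by omega)) (hstep k h1 h2) htf htfeq
          ((hgreedy k h1 h2).2.1)
    · exact hlow tg htg fun k h1 h2 =>
        step_g σ ε (c k) (c (k+1)) tg hσ0 hσ1 (hpos k h1 (by omega)) (hstep k h1 h2) htg htgeq
          ((hgreedy k h1 h2).2.2.1)
  -- upper bound
  · set ρf := (1+ε) ^ ((1:ℝ)/(1-σ)) with hρfdef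
    set ρg := (1-ε) ^ (-(1:ℝ)/σ) with hρgdef
    have hρf1 : 1 < ρf :=
      (Real.one_lt_rpow_iff_of_pos (by linarith)).mpr (Or.inl ⟨by linarith, one_div_pos.mpr (by linarith)⟩)
    have hρg1 : 1 < ρg := by
      apply (Real.one_lt_rpow_iff_of_pos hε2).mpr
      right
      constructor
      · linarith
      · rw [neg_div]; exact neg_neg_iff_pos.mpr (one_div_pos.mpr hσ0)
    set ρ := min ρf ρg with hρdef
    have hρ1 : 1 < ρ := lt_min hρf1 hρg1
    have hρpos : (0:ℝ) < ρ := by linarith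
    have hρfpow : ρ ^ (1-σ) ≤ 1 + ε := by
      calc ρ ^ (1-σ) ≤ ρf ^ (1-σ) :=
            Real.rpow_le_rpow hρpos.le (min_le_left _ _) (by linarith)
        _ = 1 + ε := by
            rw [hρfdef, ← Real.rpow_mul (by linarith)]
            rw [one_div_mul_cancel (show (1:ℝ)-σ ≠ 0 from (by linarith : (0:ℝ) < 1-σ).ne'), Real.rpow_one]
    have hρgpow : 1 - ε ≤ ρ ^ (-σ) := by
      have h1 : ρg ^ (-σ) ≤ ρ ^ (-σ) :=
        Real.rpow_le_rpow_of_nonpos hρpos (min_le_right _ _) (by linarith)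
      have h2 : ρg ^ (-σ) = 1 - ε := by
        rw [hρgdef, ← Real.rpow_mul hε2.le]
        rw [show (-(1:ℝ)/σ) * (-σ) = 1 by rw [neg_div, neg_mul_neg, one_div_mul_cancel hσ0.ne'], Real.rpow_one]
      linarith
    have hgrow : ∀ k, 1 ≤ k → k + 1 ≤ K → c k * ρ ≤ c (k+1) := by
      intro k h1 h2
      have hck := hpos k h1 (by omega)
      have hckU' : c k < U := by
        have := hstep k h1 (by omega)
        have h3 := hckU k h1 (by omega)
        linarith
      have hck1U : c (k+1) < U := by
        have := hstep (k+1) (by omega) h2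
        have h3 := hckU (k+1) (by omega) h2
        linarith
      set u' := min (c k * ρ) U with hu'def
      have hu'c : c k < u' := lt_min (by nlinarith) hckU'
      have hu'r : u' / c k ≤ ρ := by
        rw [div_le_iff₀ hck]
        calc u' ≤ c k * ρ := min_le_left _ _
          _ = ρ * c k := mul_comm _ _
      obtain ⟨hPf, hPg⟩ := Phi_both_le σ ε ρ (c k) u' hσ0 hσ1 hε0.le (by linarith)
        hck hu'c hu'r hρfpow hρgpow
      have hmax := (hgreedy k h1 (by omega)).2.2.2 u' ⟨hu'c, min_le_right _ _⟩ hPf hPg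
      rcases le_or_gt (c k * ρ) U with h | h
      · rw [hu'def, min_eq_left h] at hmax; exact hmax
      · exfalso; rw [hu'def, min_eq_right h.le] at hmax; linarith
    have hlogρ : 0 < Real.log ρ := Real.log_pos hρ1
    have htel := Finset.sum_range_sub (fun i => Real.log (c (i+1))) (K-1)
    have hKidx : K - 1 + 1 = K := by omega
    have hsumlow : ((K:ℝ) - 1) * Real.log ρ ≤ Real.log (U/L) := by
      have hb : ∀ i ∈ Finset.range (K-1),
          Real.log ρ ≤ Real.log (c (i+1+1)) - Real.log (c (i+1)) := by
        intro i hi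
        have hi' := Finset.mem_range.mp hi
        have hck := hpos (i+1) (by omega) (by omega)
        have h1 := hgrow (i+1) (by omega) (by omega)
        have h2 : Real.log (c (i+1) * ρ) ≤ Real.log (c (i+1+1)) := by
          rw [Real.log_le_log_iff (by positivity) (hpos (i+2) (by omega) (by omega))]
          exact h1
        rw [Real.log_mul hck.ne' (by positivity)] at h2
        linarith
      have hs : ((K-1 : ℕ) : ℝ) * Real.log ρ ≤ Real.log (c K) - Real.log L := by
        calc ((K-1 : ℕ) : ℝ) * Real.log ρ
            = ∑ _i ∈ Finset.range (K-1), Real.log ρ := by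
              rw [Finset.sum_const, Finset.card_range, nsmul_eq_mul]
          _ ≤ ∑ i ∈ Finset.range (K-1),
                (Real.log (c (i+1+1)) - Real.log (c (i+1))) := Finset.sum_le_sum hb
          _ = Real.log (c (K-1+1)) - Real.log (c 1) := htel
          _ = Real.log (c K) - Real.log L := by rw [hKidx, hc1]
      have hcKU : c K < U := by
        have := hstep K (by omega) le_rfl
        rw [hcK] at this
        exact this
      have hlcK : Real.log (c K) ≤ Real.log U := by
        rw [Real.log_le_log_iff (hpos K (by omega) (by omega)) (by linarith)]
        exact hcKU.le
      have hcast : ((K-1 : ℕ) : ℝ) = (K:ℝ) - 1 := by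
        rw [Nat.cast_sub hK, Nat.cast_one]
      rw [hcast] at hs
      rw [hUL]
      linarith
    have hlog1ε : 0 < Real.log (1+ε) := Real.log_pos (by linarith)
    have hlognegε : Real.log (1-ε) < 0 := Real.log_neg hε2 (by linarith)
    have hlρf : Real.log ρf = Real.log (1+ε) / (1-σ) := by
      rw [hρfdef, Real.log_rpow (by linarith)]; ring
    have hlρg : Real.log ρg = -Real.log (1-ε) / σ := by
      rw [hρgdef, Real.log_rpow hε2]; ring
    have hf' : 0 < Real.log ρf := Real.log_pos hρf1
    have hg' : 0 < Real.log ρg := Real.log_pos hρg1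
    have hA : 1 / Real.log ρ ≤ (1-σ)/Real.log (1+ε) - σ/Real.log (1-ε) := by
      have h1 : 1/Real.log ρf = (1-σ)/Real.log (1+ε) := by
        rw [hlρf, one_div_div]
      have h2 : 1/Real.log ρg = -(σ/Real.log (1-ε)) := by
        rw [hlρg, one_div_div, div_neg]
      have hsum : (1-σ)/Real.log (1+ε) - σ/Real.log (1-ε)
          = 1/Real.log ρf + 1/Real.log ρg := by rw [h1, h2]; ring
      rw [hsum]
      rcases le_total ρf ρg with h | h
      · have : ρ = ρf := min_eq_left h
        rw [this]
        have : 0 < 1/Real.log ρg := by positivity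
        linarith
      · have : ρ = ρg := min_eq_right h
        rw [this]
        have : 0 < 1/Real.log ρf := by positivity
        linarith
    have hK1 : (K:ℝ) - 1 ≤ Real.log (U/L) * (1/Real.log ρ) := by
      rw [mul_one_div, le_div_iff₀ hlogρ]
      linarith
    have := mul_le_mul_of_nonneg_left hA hULpos.le
    linarith
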